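/- Let p : E → (0,1] be a probability distribution on exposures and w : E → ℝ a weight function. Assume Y is additive with parameters α = Y(0) and θ_{k,j} = Y(j·e_k unit vector) - Y(0). Then the linear estimator w(E_obs)·Y(E_obs) satisfies E[w(E_obs)Y(E_obs)] = θ_{1,m₁} for ALL additive potential outcome functions Y if and only if: (i) Σ_e p(e)w(e) = 0; (ii) Σ_e p(e)w(e)·1{e₁ = m₁} = 1; (iii) Σ_e p(e)w(e)·1{e₁ = m} = 0 for all m ∈ {1,...,m₁-1}; (iv) Σ_e p(e)w(e)·1{e_k = j} = 0 for all k ∈ {2,...,K} and j ∈ {1,...,m_k}. -/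
import Mathlib


/-- A linear estimator `w(E_obs) Y(E_obs)` is unbiased for `θ_{1,m₁}` for ALL additive
potential outcome functions `Y(e) = α + Σ_{k,j} θ_{k,j} 1{e_k = j}` if and only if the
four families of linear constraints on `w` hold. The exposure set is
`{0,…,m₀} × ⋯ × {0,…,m_K}` (first component is index `0`). -/
theorem stmt3 (K : ℕ) (m : Fin (K + 1) → ℕ) (hm : 1 ≤ m 0)
    (p : ((k : Fin (K + 1)) → Fin (m k + 1)) → ℝ)
    (hp : ∀ e, 0 < p e) (hp1 : ∑ e, p e = 1)
    (w : ((k : Fin (K + 1)) → Fin (m k + 1)) → ℝ) :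
    (∀ (α : ℝ) (θ : Fin (K + 1) → ℕ → ℝ),
        ∑ e, p e * w e *
            (α + ∑ k : Fin (K + 1), ∑ j ∈ Finset.Icc 1 (m k),
                θ k j * (if (e k : ℕ) = j then 1 else 0))
          = θ 0 (m 0))
    ↔ ((∑ e, p e * w e = 0) ∧
       (∑ e, p e * w e * (if (e 0 : ℕ) = m 0 then 1 else 0) = 1) ∧
       (∀ j ∈ Finset.Icc 1 (m 0 - 1),
          ∑ e, p e * w e * (if (e 0 : ℕ) = j then 1 else 0) = 0) ∧
       (∀ k : Fin (K + 1), k ≠ 0 → ∀ j ∈ Finset.Icc 1 (m k),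
          ∑ e, p e * w e * (if (e k : ℕ) = j then 1 else 0) = 0)) := by
  have key : ∀ (α : ℝ) (θ : Fin (K + 1) → ℕ → ℝ),
      ∑ e, p e * w e *
          (α + ∑ k : Fin (K + 1), ∑ j ∈ Finset.Icc 1 (m k),
              θ k j * (if (e k : ℕ) = j then 1 else 0))
        = α * (∑ e, p e * w e) + ∑ k : Fin (K + 1), ∑ j ∈ Finset.Icc 1 (m k),
            θ k j * (∑ e, p e * w e * (if (e k : ℕ) = j then 1 else 0)) := by
    intro α θ
    have step : ∀ e, p e * w e *
          (α + ∑ k : Fin (K + 1), ∑ j ∈ Finset.Icc 1 (m k),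
              θ k j * (if (e k : ℕ) = j then 1 else 0))
        = α * (p e * w e) + ∑ k : Fin (K + 1), ∑ j ∈ Finset.Icc 1 (m k),
            θ k j * (p e * w e * (if (e k : ℕ) = j then 1 else 0)) := by
      intro e
      rw [mul_add, Finset.mul_sum]
      congr 1
      · ring
      · refine Finset.sum_congr rfl fun k _ => ?_
        rw [Finset.mul_sum]
        exact Finset.sum_congr rfl fun j _ => by ring
    calc ∑ e, p e * w e *
          (α + ∑ k : Fin (K + 1), ∑ j ∈ Finset.Icc 1 (m k),
              θ k j * (if (e k : ℕ) = j then 1 else 0))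
        = ∑ e, (α * (p e * w e) + ∑ k : Fin (K + 1), ∑ j ∈ Finset.Icc 1 (m k),
            θ k j * (p e * w e * (if (e k : ℕ) = j then 1 else 0))) :=
          Finset.sum_congr rfl fun e _ => step e
      _ = α * (∑ e, p e * w e) + ∑ k : Fin (K + 1), ∑ j ∈ Finset.Icc 1 (m k),
            θ k j * (∑ e, p e * w e * (if (e k : ℕ) = j then 1 else 0)) := by
          rw [Finset.sum_add_distrib, ← Finset.mul_sum]
          congr 1
          rw [Finset.sum_comm]
          refine Finset.sum_congr rfl fun k _ => ?_
          rw [Finset.sum_comm]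
          refine Finset.sum_congr rfl fun j _ => ?_
          rw [← Finset.mul_sum]
  constructor
  · intro h
    have hA0 : ∑ e, p e * w e = 0 := by
      have := h 1 (fun _ _ => 0)
      rw [key] at this
      simpa using this
    have hBval : ∀ (k : Fin (K + 1)) (j : ℕ), j ∈ Finset.Icc 1 (m k) →
        (∑ e, p e * w e * (if (e k : ℕ) = j then 1 else 0))
          = (if (0 : Fin (K + 1)) = k ∧ m 0 = j then (1 : ℝ) else 0) := by
      intro k j hj
      have := h 0 (fun k' j' => if k' = k ∧ j' = j then 1 else 0)
      rw [key] at this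
      rw [zero_mul, zero_add] at this
      rw [Finset.sum_eq_single_of_mem k (Finset.mem_univ k)
        (fun k' _ hk' => by
          apply Finset.sum_eq_zero
          intro j' _
          rw [if_neg (by simp [hk']), zero_mul])] at this
      rw [Finset.sum_eq_single_of_mem j hj
        (fun j' _ hj' => by rw [if_neg (by simp [hj']), zero_mul])] at this
      rw [if_pos ⟨rfl, rfl⟩, one_mul] at this
      exact this
    have hm0 : m 0 ∈ Finset.Icc 1 (m 0) := Finset.mem_Icc.mpr ⟨hm, le_refl _⟩
    refine ⟨hA0, ?_, ?_, ?_⟩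
    · have := hBval 0 (m 0) hm0
      rwa [if_pos ⟨rfl, rfl⟩] at this
    · intro j hj
      rw [Finset.mem_Icc] at hj
      have hjm : ¬ ((0 : Fin (K + 1)) = 0 ∧ m 0 = j) := by
        rintro ⟨-, h'⟩; omega
      have hj' : j ∈ Finset.Icc 1 (m 0) := Finset.mem_Icc.mpr ⟨hj.1, by omega⟩
      have := hBval 0 j hj'
      rwa [if_neg hjm] at this
    · intro k hk j hj
      have := hBval k j hj
      rwa [if_neg (fun h' => hk h'.1.symm)] at this
  · rintro ⟨h1, h2, h3, h4⟩ α θ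
    rw [key, h1, mul_zero, zero_add]
    rw [Finset.sum_eq_single_of_mem (0 : Fin (K + 1)) (Finset.mem_univ _)
      (fun k _ hk => Finset.sum_eq_zero fun j hj => by
        rw [h4 k hk j hj, mul_zero])]
    rw [Finset.sum_eq_single_of_mem (m 0) (Finset.mem_Icc.mpr ⟨hm, le_refl _⟩)
      (fun j hj hj' => by
        rw [Finset.mem_Icc] at hj
        have : j ∈ Finset.Icc 1 (m 0 - 1) := Finset.mem_Icc.mpr ⟨hj.1, by omega⟩
        rw [h3 j this, mul_zero])]
    rw [h2, mul_one]
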